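/- Let G be a finite abelian group with a nondegenerate Hermitian bicharacter χ such that χ(g,g) = 1 for all g ∈ G. Then there exists a subgroup H ≤ G with H = H' (H equals its own annihilator); consequently |G| = |H|². -/

import Mathlib

/-- The annihilator of a set `S ⊆ G` with respect to a bicharacter `χ`. -/
def annihilator {G : Type*} [CommGroup G] (χ : G → G → ℂˣ) (S : Set G) : Set G :=
  {g : G | ∀ h ∈ S, χ h g = 1}

private lemma monoidHom_units_equiv (A : Type*) [CommGroup A] [Finite A] :
    Nonempty ((A →* ℂˣ) ≃* A) := by
  have : NeZero ((Monoid.exponent A : ℕ) : ℂ) :=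
    ⟨by exact_mod_cast Nat.cast_ne_zero.mpr Monoid.exponent_ne_zero_of_finite⟩
  exact CommGroup.monoidHom_mulEquiv_of_hasEnoughRootsOfUnity A ℂ

theorem exists_lagrangian_subgroup
    (G : Type*) [CommGroup G] [Fintype G] (χ : G → G → ℂˣ)
    (hmul₁ : ∀ g₁ g₂ h : G, χ (g₁ * g₂) h = χ g₁ h * χ g₂ h)
    (hmul₂ : ∀ g h₁ h₂ : G, χ g (h₁ * h₂) = χ g h₁ * χ g h₂)
    (hnd : ∀ g : G, (∀ h : G, χ g h = 1) → g = 1)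
    (hherm : ∀ g h : G, (χ g h : ℂ) = (starRingEnd ℂ) ((χ h g : ℂ)))
    (hdiag : ∀ g : G, χ g g = 1) :
    ∃ H : Subgroup G, (H : Set G) = annihilator χ (H : Set G) ∧
      Nat.card G = Nat.card H ^ 2 := by
  classical
  have hone₁ : ∀ h : G, χ 1 h = 1 := fun h => by
    have := hmul₁ 1 1 h; rw [one_mul] at this; exact left_eq_mul.mp this
  have hone₂ : ∀ g : G, χ g 1 = 1 := fun g => by
    have := hmul₂ g 1 1; rw [one_mul] at this; exact left_eq_mul.mp this
  let D : G →* G →* ℂˣ :=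
    { toFun := fun g =>
        { toFun := fun h => χ g h
          map_one' := hone₂ g
          map_mul' := fun h₁ h₂ => hmul₂ g h₁ h₂ }
      map_one' := MonoidHom.ext fun h => hone₁ h
      map_mul' := fun g₁ g₂ => MonoidHom.ext fun h => hmul₁ g₁ g₂ h }
  have hzpow : ∀ (f : G →* ℂˣ) (n : ℤ) (x : G), (f ^ n) x = f x ^ n := fun _ _ _ => rfl
  have hsym : ∀ a b : G, χ a b = 1 → χ b a = 1 := by
    intro a b h
    have : (χ b a : ℂ) = 1 := by rw [hherm b a, h, Units.val_one, map_one]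
    exact Units.val_eq_one.mp this
  -- a maximal isotropic subgroup
  let S : Set (Subgroup G) := {K | ∀ a ∈ K, ∀ b ∈ K, χ a b = 1}
  have hbot : (⊥ : Subgroup G) ∈ S := by
    intro a ha b hb
    rw [Subgroup.mem_bot] at ha hb
    subst ha; subst hb; exact hone₁ 1
  obtain ⟨H, HS, Hmax⟩ := Set.Finite.exists_maximalFor id S (Set.toFinite S) ⟨⊥, hbot⟩
  have hsub : (H : Set G) ⊆ annihilator χ (H : Set G) := fun g hg h hh => HS h hh g hg
  have hsup : annihilator χ (H : Set G) ⊆ (H : Set G) := by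
    intro g hg
    have hg' : ∀ h ∈ H, χ h g = 1 := hg
    set K : Subgroup G := H ⊔ Subgroup.zpowers g with hKdef
    have hK : K ∈ S := by
      intro a ha b hb
      rw [hKdef, Subgroup.mem_sup] at ha hb
      obtain ⟨h₁, hh₁, z₁, hz₁, rfl⟩ := ha
      obtain ⟨h₂, hh₂, z₂, hz₂, rfl⟩ := hb
      obtain ⟨m, rfl⟩ := Subgroup.mem_zpowers_iff.mp hz₁
      obtain ⟨n, rfl⟩ := Subgroup.mem_zpowers_iff.mp hz₂
      have e1 : D h₁ h₂ = 1 := HS h₁ hh₁ h₂ hh₂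
      have e2 : D h₁ g = 1 := hg' h₁ hh₁
      have e3 : D g h₂ = 1 := hsym h₂ g (hg' h₂ hh₂)
      have e4 : D g g = 1 := hdiag g
      show D (h₁ * g ^ m) (h₂ * g ^ n) = 1
      simp [map_mul, map_zpow, MonoidHom.mul_apply, hzpow, e1, e2, e3, e4]
    have hHK : H = K := le_antisymm le_sup_left (Hmax hK le_sup_left)
    have : g ∈ K := Subgroup.mem_sup_right (Subgroup.mem_zpowers g)
    rwa [← hHK] at this
  have hann : (H : Set G) = annihilator χ (H : Set G) := Set.Subset.antisymm hsub hsup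
  refine ⟨H, hann, ?_⟩
  -- cardinality
  obtain ⟨e₁⟩ := monoidHom_units_equiv ↥H
  have hfin₁ : Finite (↥H →* ℂˣ) := Finite.of_equiv ↥H e₁.toEquiv.symm
  obtain ⟨e₂⟩ := monoidHom_units_equiv (G ⧸ H)
  have hfin₂ : Finite ((G ⧸ H) →* ℂˣ) := Finite.of_equiv (G ⧸ H) e₂.toEquiv.symm
  -- upper bound via restriction to H
  let F : G →* (↥H →* ℂˣ) :=
    { toFun := fun g => (D.flip g).comp H.subtype
      map_one' := by ext h; simp
      map_mul' := fun g₁ g₂ => by ext h; simp }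
  have hker : F.ker = H := by
    ext g
    constructor
    · intro hgk
      apply hsup
      intro h hh
      have h1 : F g ⟨h, hh⟩ = 1 := by rw [MonoidHom.mem_ker.mp hgk]; rfl
      exact h1
    · intro hgH
      rw [MonoidHom.mem_ker]
      exact MonoidHom.ext fun h => hsub hgH h.1 h.2
  have h1 : Nat.card G = Nat.card F.range * Nat.card F.ker := by
    rw [Subgroup.card_eq_card_quotient_mul_card_subgroup F.ker,
      Nat.card_congr (QuotientGroup.quotientKerEquivRange F).toEquiv]
  have h2 : Nat.card F.range ≤ Nat.card ↥H :=
    le_trans (Nat.card_le_card_of_injective _ Subtype.val_injective)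
      (le_of_eq (Nat.card_congr e₁.toEquiv))
  -- lower bound via characters of G ⧸ H
  let j : ↥H → ((G ⧸ H) →* ℂˣ) := fun x =>
    QuotientGroup.lift H (D.flip x.1) (fun h hh => hsub x.2 h hh)
  have hj : Function.Injective j := by
    intro x y hxy
    have hz : ∀ z : G, χ z x.1 = χ z y.1 := by
      intro z
      have := congrArg (fun f : (G ⧸ H) →* ℂˣ => f (QuotientGroup.mk z)) hxy
      exact this
    have hone : ∀ z : G, χ (x.1 * y.1⁻¹) z = 1 := by
      intro z
      apply hsym
      have hinv : χ z y.1⁻¹ = (χ z y.1)⁻¹ := map_inv (D z) y.1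
      rw [hmul₂, hinv, hz z, mul_inv_cancel]
    have := hnd _ hone
    exact Subtype.ext (by rwa [mul_inv_eq_one] at this)
  have h3 : Nat.card ↥H ≤ Nat.card (G ⧸ H) :=
    le_trans (Nat.card_le_card_of_injective j hj) (le_of_eq (Nat.card_congr e₂.toEquiv))
  have h4 : Nat.card G = Nat.card (G ⧸ H) * Nat.card ↥H :=
    Subgroup.card_eq_card_quotient_mul_card_subgroup H
  have hup : Nat.card G ≤ Nat.card ↥H ^ 2 := by
    rw [h1, hker, sq]
    exact Nat.mul_le_mul_right _ h2
  have hlo : Nat.card ↥H ^ 2 ≤ Nat.card G := by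
    rw [h4, sq]
    exact Nat.mul_le_mul_right _ h3
  exact le_antisymm hup hlo
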